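/- Let M̄ be the subspace of d×d matrices Θ with col(Θ) ⊆ col(U^r) or col(Θᵀ) ⊆ col(V^r) (precisely, the subspace whose orthogonal complement is {Θ : col(Θ) ⊆ col(U^r)⊥, col(Θᵀ) ⊆ col(V^r)⊥}), where U^r, V^r each have r orthonormal columns. Then every Θ ∈ M̄ has rank at most 2r, and consequently the subspace compatibility φ(M̄) = sup_{Θ∈M̄\{0}} ‖Θ‖_*/‖Θ‖_F satisfies φ(M̄) ≤ √(2r). -/

import Mathlib

/-- The square root of a positive semidefinite matrix (as in the older Mathlib's
`Matrix.PosSemidef.sqrt`, removed since). -/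
noncomputable def Matrix.PosSemidef.sqrt {n : Type*} [Fintype n] [DecidableEq n]
    {A : Matrix n n ℝ} (hA : A.PosSemidef) : Matrix n n ℝ :=
  (hA.1.eigenvectorUnitary : Matrix n n ℝ) * Matrix.diagonal (fun i => Real.sqrt (hA.1.eigenvalues i)) *
    (star hA.1.eigenvectorUnitary : Matrix n n ℝ)

/-- Nuclear norm: sum of singular values, i.e. the trace of `√(AᵀA)`. -/
noncomputable def nuclearNorm {m n : ℕ} (A : Matrix (Fin m) (Fin n) ℝ) : ℝ :=
  (Matrix.PosSemidef.sqrt (Matrix.posSemidef_conjTranspose_mul_self A)).trace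

/-- Frobenius norm: `√(trace(AᵀA))`. -/
noncomputable def frobNorm {m n : ℕ} (A : Matrix (Fin m) (Fin n) ℝ) : ℝ :=
  Real.sqrt (A.transpose * A).trace

lemma aux_trace_eq_sum_eigs {n : ℕ} {A : Matrix (Fin n) (Fin n) ℝ} (hA : A.IsHermitian) :
    A.trace = ∑ i, hA.eigenvalues i := by
  conv_lhs => rw [hA.spectral_theorem]
  rw [Unitary.conjStarAlgAut_apply, Matrix.trace_mul_cycle,
    (Matrix.mem_unitaryGroup_iff').mp (hA.eigenvectorUnitary).2, Matrix.one_mul]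
  simp [Matrix.trace_diagonal]

lemma aux_trace_sqrt {n : ℕ} {A : Matrix (Fin n) (Fin n) ℝ} (hA : A.PosSemidef) :
    hA.sqrt.trace = ∑ i, Real.sqrt (hA.1.eigenvalues i) := by
  rw [Matrix.PosSemidef.sqrt, Matrix.trace_mul_cycle,
    (Matrix.mem_unitaryGroup_iff').mp (hA.1.eigenvectorUnitary).2, Matrix.one_mul]
  simp [Matrix.trace_diagonal]

lemma aux_rank_add_le {d : ℕ} (A B : Matrix (Fin d) (Fin d) ℝ) :
    (A + B).rank ≤ A.rank + B.rank := by
  unfold Matrix.rank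
  rw [Matrix.mulVecLin_add]
  refine le_trans (Submodule.finrank_mono ?_) (Submodule.finrank_add_le_finrank_add_finrank _ _)
  rintro x ⟨v, rfl⟩
  exact Submodule.add_mem_sup (LinearMap.mem_range_self _ v) (LinearMap.mem_range_self _ v)

/-- Any matrix `Θ` in the subspace `M̄`, i.e. in the orthogonal complement (w.r.t. the trace
inner product) of `{N : col(N) ⊆ col(Uʳ)ᗮ, col(Nᵀ) ⊆ col(Vʳ)ᗮ}`, has rank at most `2r`, and
hence `‖Θ‖_* ≤ √(2r) ‖Θ‖_F`. -/
theorem mem_Mbar_rank_and_compatibility {d r : ℕ}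
    (Ur Vr : Matrix (Fin d) (Fin r) ℝ)
    (hU : Ur.transpose * Ur = 1) (hV : Vr.transpose * Vr = 1)
    (Θ : Matrix (Fin d) (Fin d) ℝ)
    (hΘ : ∀ N : Matrix (Fin d) (Fin d) ℝ,
      Ur.transpose * N = 0 → N * Vr = 0 → (Θ.transpose * N).trace = 0) :
    Θ.rank ≤ 2 * r ∧ nuclearNorm Θ ≤ Real.sqrt (2 * r) * frobNorm Θ := by
  set P : Matrix (Fin d) (Fin d) ℝ := Ur * Ur.transpose with hPdef
  set Q : Matrix (Fin d) (Fin d) ℝ := Vr * Vr.transpose with hQdef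
  have hPP : P * P = P := by
    rw [hPdef, Matrix.mul_assoc, ← Matrix.mul_assoc Ur.transpose, hU, Matrix.one_mul]
  have hQQ : Q * Q = Q := by
    rw [hQdef, Matrix.mul_assoc, ← Matrix.mul_assoc Vr.transpose, hV, Matrix.one_mul]
  have hPt : P.transpose = P := by
    rw [hPdef, Matrix.transpose_mul, Matrix.transpose_transpose]
  have hQt : Q.transpose = Q := by
    rw [hQdef, Matrix.transpose_mul, Matrix.transpose_transpose]
  set M : Matrix (Fin d) (Fin d) ℝ := (1 - P) * (Θ * (1 - Q)) with hMdef
  -- `M` is orthogonal to Θ constraint, so trace (Θᵀ M) = 0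
  have h1 : Ur.transpose * (1 - P) = 0 := by
    rw [Matrix.mul_sub, Matrix.mul_one, hPdef, ← Matrix.mul_assoc, hU, Matrix.one_mul, sub_self]
  have h2 : (1 - Q) * Vr = 0 := by
    rw [Matrix.sub_mul, Matrix.one_mul, hQdef, Matrix.mul_assoc, hV, Matrix.mul_one, sub_self]
  have htr0 : (Θ.transpose * M).trace = 0 := by
    refine hΘ M ?_ ?_
    · rw [hMdef, ← Matrix.mul_assoc, h1, Matrix.zero_mul]
    · rw [hMdef, Matrix.mul_assoc, Matrix.mul_assoc, h2, Matrix.mul_zero, Matrix.mul_zero]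
  -- trace (Mᵀ M) = trace (Θᵀ M)
  have hMM : (M.transpose * M).trace = (Θ.transpose * M).trace := by
    have hMt : M.transpose = ((1 - Q) * Θ.transpose) * (1 - P) := by
      rw [hMdef, Matrix.transpose_mul, Matrix.transpose_mul, Matrix.transpose_sub,
        Matrix.transpose_sub, Matrix.transpose_one, hPt, hQt, Matrix.mul_assoc]
    have hP2 : (1 - P) * (1 - P) = 1 - P := by
      rw [Matrix.sub_mul, Matrix.one_mul, Matrix.mul_sub, Matrix.mul_one, hPP]; simp
    have hQ2 : (1 - Q) * (1 - Q) = 1 - Q := by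
      rw [Matrix.sub_mul, Matrix.one_mul, Matrix.mul_sub, Matrix.mul_one, hQQ]; simp
    have key : M.transpose * M = ((1 - Q) * Θ.transpose) * M := by
      rw [hMt, hMdef, Matrix.mul_assoc, ← Matrix.mul_assoc (1 - P), hP2]
    rw [key, Matrix.mul_assoc, Matrix.trace_mul_comm]
    congr 1
    rw [hMdef, Matrix.mul_assoc, Matrix.mul_assoc, Matrix.mul_assoc, hQ2]
  -- hence M = 0
  have hM0 : M = 0 := by
    have hsum : ∑ j, ∑ k, (M k j) ^ 2 = 0 := by
      have := hMM.trans htr0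
      simpa [Matrix.trace, Matrix.mul_apply, Matrix.diag, sq] using this
    ext k j
    have h1' : ∀ j ∈ Finset.univ, (∑ k, (M k j) ^ 2) = 0 :=
      (Finset.sum_eq_zero_iff_of_nonneg (fun j _ =>
        Finset.sum_nonneg fun k _ => sq_nonneg _)).mp hsum
    have h2' : ∀ k ∈ Finset.univ, (M k j) ^ 2 = 0 :=
      (Finset.sum_eq_zero_iff_of_nonneg (fun k _ => sq_nonneg _)).mp
        (h1' j (Finset.mem_univ _))
    have := h2' k (Finset.mem_univ _)
    simpa using pow_eq_zero_iff (n := 2) (by norm_num) |>.mp this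
  -- decomposition and rank bound
  have hdecomp : Θ = P * (Θ * (1 - Q)) + Θ * Q := by
    have h0 : (1 - P) * (Θ * (1 - Q)) = 0 := hM0
    rw [Matrix.sub_mul, Matrix.one_mul] at h0
    have h := sub_eq_zero.mp h0
    calc Θ = Θ * (1 - Q) + Θ * Q := by rw [Matrix.mul_sub, Matrix.mul_one]; abel
    _ = P * (Θ * (1 - Q)) + Θ * Q := by rw [← h]
  have hrank : Θ.rank ≤ 2 * r := by
    calc Θ.rank = (P * (Θ * (1 - Q)) + Θ * Q).rank := by rw [← hdecomp]
    _ ≤ (P * (Θ * (1 - Q))).rank + (Θ * Q).rank := aux_rank_add_le _ _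
    _ ≤ P.rank + Q.rank :=
        Nat.add_le_add (Matrix.rank_mul_le_left _ _) (Matrix.rank_mul_le_right _ _)
    _ ≤ r + r := by
      refine Nat.add_le_add ?_ ?_
      · exact le_trans (Matrix.rank_mul_le_left _ _)
          (le_trans (Matrix.rank_le_card_width Ur) (le_of_eq (Fintype.card_fin r)))
      · exact le_trans (Matrix.rank_mul_le_left _ _)
          (le_trans (Matrix.rank_le_card_width Vr) (le_of_eq (Fintype.card_fin r)))
    _ = 2 * r := by ring
  refine ⟨hrank, ?_⟩
  -- nuclear norm bound
  have hPSD := Matrix.posSemidef_conjTranspose_mul_self Θ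
  set lam := hPSD.1.eigenvalues with hlam
  have hlam_nonneg : ∀ i, 0 ≤ lam i := fun i => hPSD.eigenvalues_nonneg i
  have hNN : nuclearNorm Θ = ∑ i, Real.sqrt (lam i) := aux_trace_sqrt hPSD
  have hTT : Θ.transpose * Θ = Θ.conjTranspose * Θ := by
    rw [Matrix.conjTranspose_eq_transpose_of_trivial]
  have hFF : frobNorm Θ = Real.sqrt (∑ i, lam i) := by
    rw [frobNorm, hTT, aux_trace_eq_sum_eigs hPSD.1]
  -- the set of nonzero eigenvalues has card ≤ 2r
  classical
  set s : Finset (Fin d) := Finset.univ.filter (fun i => lam i ≠ 0) with hs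
  have hcard : s.card ≤ 2 * r := by
    have h1 : (Θ.conjTranspose * Θ).rank = Θ.rank := Matrix.rank_conjTranspose_mul_self Θ
    have h2 := hPSD.1.rank_eq_card_non_zero_eigs
    have h3 : Fintype.card {i // hPSD.1.eigenvalues i ≠ 0} = s.card := by
      rw [hs, hlam]; simp [Fintype.card_subtype]
    rw [h2, h3] at h1
    omega
  have hsum_le : (∑ i, Real.sqrt (lam i)) ^ 2 ≤ (2 * r) * ∑ i, lam i := by
    have he : ∑ i, Real.sqrt (lam i) = ∑ i ∈ s, Real.sqrt (lam i) := by
      refine (Finset.sum_subset (Finset.subset_univ s) ?_).symm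
      intro i _ hi
      have : lam i = 0 := by
        by_contra h
        exact hi (by simp [hs, h])
      simp [this]
    rw [he]
    calc (∑ i ∈ s, Real.sqrt (lam i)) ^ 2
        ≤ s.card * ∑ i ∈ s, Real.sqrt (lam i) ^ 2 := by
          exact_mod_cast sq_sum_le_card_mul_sum_sq (s := s) (f := fun i => Real.sqrt (lam i))
    _ = s.card * ∑ i ∈ s, lam i := by
          congr 1
          exact Finset.sum_congr rfl fun i _ => Real.sq_sqrt (hlam_nonneg i)
    _ ≤ (2 * r) * ∑ i, lam i := by
          refine mul_le_mul ?_ ?_ (Finset.sum_nonneg fun i _ => hlam_nonneg i) (by positivity)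
          · exact_mod_cast hcard
          · exact Finset.sum_le_sum_of_subset_of_nonneg (Finset.subset_univ s)
              (fun i _ _ => hlam_nonneg i)
  rw [hNN, hFF, ← Real.sqrt_mul (by positivity)]
  exact Real.le_sqrt_of_sq_le hsum_le
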